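/- (Levi) If G is a nontrivial finitely generated bi-orderable group, then there is a surjective group homomorphism from G onto the integers ℤ. -/

import Mathlib

set_option linter.unusedSectionVars false
set_option linter.unusedVariables false
set_option maxHeartbeats 1000000


section Holder

variable {Q : Type*} [Group Q] [LinearOrder Q]
  [CovariantClass Q Q (· * ·) (· < ·)] [CovariantClass Q Q (Function.swap (· * ·)) (· < ·)]

theorem holder_aux_zpow_lt (x : Q) (hx : 1 < x) {m n : ℤ} (hmn : m < n) : x ^ m < x ^ n := by
  haveI := covariantClass_le_of_lt Q Q (· * ·)
  haveI := covariantClass_le_of_lt Q Q (Function.swap (· * ·))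
  have h1 : (1 : Q) < x ^ (n - m) := by
    have h : x ^ (n - m) = x ^ (n - m).toNat := by
      rw [← zpow_natCast, Int.toNat_of_nonneg (by omega)]
    rw [h]
    exact one_lt_pow' hx (by omega)
  calc x ^ m = 1 * x ^ m := (one_mul _).symm
    _ < x ^ (n - m) * x ^ m := mul_lt_mul_left h1 _
    _ = x ^ n := by rw [← zpow_add, sub_add_cancel]

/-- Digit lemma: for `1 < ε` and any `g` there is `m` with `ε ^ m ≤ g < ε ^ (m + 1)`. -/
theorem holder_digit (arch : ∀ x y : Q, 1 < x → ∃ n : ℕ, y ≤ x ^ n)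
    {ε : Q} (hε : 1 < ε) (g : Q) : ∃ m : ℤ, ε ^ m ≤ g ∧ g < ε ^ (m + 1) := by
  haveI := covariantClass_le_of_lt Q Q (· * ·)
  haveI := covariantClass_le_of_lt Q Q (Function.swap (· * ·))
  obtain ⟨n₁, hn₁⟩ := arch ε g hε
  obtain ⟨n₂, hn₂⟩ := arch ε g⁻¹ hε
  have hup : g ≤ ε ^ (n₁ : ℤ) := by rw [zpow_natCast]; exact hn₁
  have hlow : ε ^ (-(n₂ : ℤ)) ≤ g := by
    rw [zpow_neg, zpow_natCast]
    exact inv_le_of_inv_le' (by simpa using hn₂)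
  have hbdd : ∃ b : ℤ, ∀ z : ℤ, ε ^ z ≤ g → z ≤ b := by
    refine ⟨n₁, fun z hz => ?_⟩
    by_contra h
    push_neg at h
    exact absurd (hz.trans hup) (not_le_of_gt (holder_aux_zpow_lt ε hε h))
  obtain ⟨m, hm, hmax⟩ := Int.exists_greatest_of_bdd hbdd ⟨-(n₂ : ℤ), hlow⟩
  refine ⟨m, hm, ?_⟩
  by_contra h
  push_neg at h
  exact absurd (hmax _ h) (by omega)

theorem holder_comm (arch : ∀ x y : Q, 1 < x → ∃ n : ℕ, y ≤ x ^ n) :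
    ∀ a b : Q, a * b = b * a := by
  haveI := covariantClass_le_of_lt Q Q (· * ·)
  haveI := covariantClass_le_of_lt Q Q (Function.swap (· * ·))
  -- main step: no pair has positive "commutator"
  have key : ∀ a b : Q, ¬ (1 < (a * b) * (b * a)⁻¹) := by
    intro a b hz
    set z := (a * b) * (b * a)⁻¹ with hzdef
    -- every ε > 1 satisfies z < ε * ε
    have hsmall : ∀ ε : Q, 1 < ε → z < ε * ε := by
      intro ε hε
      obtain ⟨m, hm1, hm2⟩ := holder_digit arch hε a
      obtain ⟨n, hn1, hn2⟩ := holder_digit arch hε b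
      have hub : a * b < ε ^ (m + 1) * ε ^ (n + 1) := mul_lt_mul_of_lt_of_lt hm2 hn2
      have hlb : ε ^ n * ε ^ m ≤ b * a := mul_le_mul' hn1 hm1
      have hinv : (b * a)⁻¹ ≤ (ε ^ n * ε ^ m)⁻¹ := inv_le_inv_iff.mpr hlb
      have e1 : ε ^ (m + 1) * ε ^ (n + 1) = ε ^ (m + n + 2) := by
        rw [← zpow_add]; ring_nf
      have e2 : (ε ^ n * ε ^ m)⁻¹ = ε ^ (-(n + m)) := by
        rw [← zpow_add, ← zpow_neg]
      calc z = (a * b) * (b * a)⁻¹ := rfl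
        _ ≤ (a * b) * (ε ^ n * ε ^ m)⁻¹ := mul_le_mul_right hinv _
        _ < (ε ^ (m + 1) * ε ^ (n + 1)) * (ε ^ n * ε ^ m)⁻¹ := mul_lt_mul_left hub _
        _ = ε * ε := by
            rw [e1, e2, ← zpow_add, show m + n + 2 + -(n + m) = 2 by ring, zpow_two]
    -- case: some ε with 1 < ε < z
    by_cases hex : ∃ ε : Q, 1 < ε ∧ ε < z
    · obtain ⟨ε, hε1, hεz⟩ := hex
      have h1 : (1 : Q) < ε⁻¹ * z := by
        have := mul_lt_mul_right hεz ε⁻¹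
        rwa [inv_mul_cancel] at this
      have h2 : (ε⁻¹ * z) * (ε⁻¹ * z) < z := by
        have hz2 : z < ε * ε := hsmall ε hε1
        have h3 : ε⁻¹ * z * ε⁻¹ < 1 := by
          calc ε⁻¹ * z * ε⁻¹ < ε⁻¹ * (ε * ε) * ε⁻¹ :=
                mul_lt_mul_left (mul_lt_mul_right hz2 ε⁻¹) ε⁻¹
            _ = 1 := by group
        calc (ε⁻¹ * z) * (ε⁻¹ * z) = (ε⁻¹ * z * ε⁻¹) * z := by group
          _ < 1 * z := mul_lt_mul_left h3 z
          _ = z := one_mul z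
      exact absurd (hsmall _ h1) (not_lt_of_gt h2)
    · -- z is the least element greater than 1; group is cyclic generated by z
      push_neg at hex
      have hmin : ∀ x : Q, 1 < x → z ≤ x := hex
      have hcyc : ∀ g : Q, ∃ m : ℤ, g = z ^ m := by
        intro g
        obtain ⟨m, hm1, hm2⟩ := holder_digit arch hz g
        refine ⟨m, ?_⟩
        have h1 : (1 : Q) ≤ (z ^ m)⁻¹ * g := by
          have := mul_le_mul_right hm1 (z ^ m)⁻¹
          rwa [inv_mul_cancel] at this
        have h2 : (z ^ m)⁻¹ * g < z := by
          have h4 : g < z ^ m * z := by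
            rw [← zpow_add_one]; exact hm2
          have := mul_lt_mul_right h4 (z ^ m)⁻¹
          rwa [inv_mul_cancel_left] at this
        rcases eq_or_lt_of_le h1 with h | h
        · have : (z ^ m)⁻¹ * g = 1 := h.symm
          rw [inv_mul_eq_one] at this
          exact this.symm
        · exact absurd (hmin _ h) (not_le_of_gt h2)
      obtain ⟨p, hp⟩ := hcyc a
      obtain ⟨q, hq⟩ := hcyc b
      have hcommab : a * b = b * a := by
        rw [hp, hq, ← zpow_add, ← zpow_add, add_comm]
      rw [hzdef, hcommab, mul_inv_cancel] at hz
      exact lt_irrefl _ hz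
  intro a b
  by_contra h
  have h1 : (a * b) * (b * a)⁻¹ ≠ 1 := by
    intro he
    rw [mul_inv_eq_one] at he
    exact h he
  rcases h1.lt_or_gt with hlt | hgt
  · have h2 : 1 < ((a * b) * (b * a)⁻¹)⁻¹ := Left.one_lt_inv_iff.mpr hlt
    have h3 : 1 < (b * a) * (a * b)⁻¹ := by
      rwa [mul_inv_rev, inv_inv] at h2
    exact key b a h3
  · exact key a b hgt

end Holder


section Convex

variable {G : Type*} [Group G] [LinearOrder G]
  [CovariantClass G G (· * ·) (· < ·)] [CovariantClass G G (Function.swap (· * ·)) (· < ·)]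

/-- A subgroup is convex (for a bi-invariant order) if it contains every element squeezed
between `1` and one of its members. -/
def ConvexSub (H : Subgroup G) : Prop :=
  ∀ ⦃g h : G⦄, h ∈ H → 1 < g → g < h → g ∈ H

theorem convexSub_bot : ConvexSub (⊥ : Subgroup G) := by
  intro g h hh h1 hlt
  rw [Subgroup.mem_bot] at hh
  subst hh
  exact absurd (h1.trans hlt) (lt_irrefl _)

theorem ConvexSub.mem_of_le {H : Subgroup G} (hH : ConvexSub H) {g h : G}
    (hh : h ∈ H) (h1 : 1 ≤ g) (hle : g ≤ h) : g ∈ H := by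
  rcases eq_or_lt_of_le h1 with rfl | h1
  · exact H.one_mem
  rcases eq_or_lt_of_le hle with rfl | hlt
  · exact hh
  · exact hH hh h1 hlt

theorem ConvexSub.mem_of_between {H : Subgroup G} (hH : ConvexSub H) {c₁ c₂ g : G}
    (hc₁ : c₁ ∈ H) (hc₂ : c₂ ∈ H) (h1 : c₁ ≤ g) (h2 : g ≤ c₂) : g ∈ H := by
  haveI := covariantClass_le_of_lt G G (· * ·)
  have k1 : (1 : G) ≤ c₁⁻¹ * g := by
    have := mul_le_mul_right h1 c₁⁻¹
    rwa [inv_mul_cancel] at this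
  have k2 : c₁⁻¹ * g ≤ c₁⁻¹ * c₂ := mul_le_mul_right h2 c₁⁻¹
  have : c₁⁻¹ * g ∈ H := hH.mem_of_le (H.mul_mem (H.inv_mem hc₁) hc₂) k1 k2
  have := H.mul_mem hc₁ this
  rwa [mul_inv_cancel_left] at this

/-- Convex subgroups form a chain. -/
theorem convexSub_chain {H K : Subgroup G} (hH : ConvexSub H) (hK : ConvexSub K) :
    H ≤ K ∨ K ≤ H := by
  haveI := covariantClass_le_of_lt G G (· * ·)
  haveI := covariantClass_le_of_lt G G (Function.swap (· * ·))
  by_contra hc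
  push_neg at hc
  obtain ⟨hHK, hKH⟩ := hc
  obtain ⟨x, hxH, hxK⟩ := SetLike.not_le_iff_exists.mp hHK
  obtain ⟨y, hyK, hyH⟩ := SetLike.not_le_iff_exists.mp hKH
  -- replace x, y by positive representatives
  obtain ⟨p, hpH, hpK, hp1⟩ : ∃ p, p ∈ H ∧ p ∉ K ∧ 1 ≤ p := by
    rcases le_total 1 x with h | h
    · exact ⟨x, hxH, hxK, h⟩
    · exact ⟨x⁻¹, H.inv_mem hxH, fun hc => hxK (by simpa using K.inv_mem hc),
        Left.one_le_inv_iff.mpr h⟩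
  obtain ⟨q, hqK, hqH, hq1⟩ : ∃ q, q ∈ K ∧ q ∉ H ∧ 1 ≤ q := by
    rcases le_total 1 y with h | h
    · exact ⟨y, hyK, hyH, h⟩
    · exact ⟨y⁻¹, K.inv_mem hyK, fun hc => hyH (by simpa using H.inv_mem hc),
        Left.one_le_inv_iff.mpr h⟩
  rcases le_total p q with h | h
  · exact hpK (hK.mem_of_le hqK hp1 h)
  · exact hqH (hH.mem_of_le hpH hq1 h)

theorem conj_lt_conj {g h : G} (f : G) (hgh : g < h) : f * g * f⁻¹ < f * h * f⁻¹ :=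
  mul_lt_mul_left (mul_lt_mul_right hgh f) f⁻¹

/-- The union of all convex subgroups avoiding a fixed element `a > 1`. -/
def maxConvex (a : G) (ha : 1 < a) : Subgroup G where
  carrier := {g | ∃ H : Subgroup G, ConvexSub H ∧ a ∉ H ∧ g ∈ H}
  one_mem' := ⟨⊥, convexSub_bot, by simp [Subgroup.mem_bot, ha.ne'], Subgroup.one_mem _⟩
  inv_mem' := by
    rintro x ⟨H, hH, haH, hxH⟩
    exact ⟨H, hH, haH, H.inv_mem hxH⟩
  mul_mem' := by
    rintro x y ⟨H, hH, haH, hxH⟩ ⟨K, hK, haK, hyK⟩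
    rcases convexSub_chain hH hK with h | h
    · exact ⟨K, hK, haK, K.mul_mem (h hxH) hyK⟩
    · exact ⟨H, hH, haH, H.mul_mem hxH (h hyK)⟩

theorem maxConvex_convex (a : G) (ha : 1 < a) : ConvexSub (maxConvex a ha) := by
  rintro g h ⟨H, hH, haH, hhH⟩ h1 hlt
  exact ⟨H, hH, haH, hH hhH h1 hlt⟩

theorem not_mem_maxConvex (a : G) (ha : 1 < a) : a ∉ maxConvex a ha := by
  rintro ⟨H, hH, haH, haH'⟩
  exact haH haH'

theorem le_maxConvex {a : G} {ha : 1 < a} {H : Subgroup G} (hH : ConvexSub H) (haH : a ∉ H) :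
    H ≤ maxConvex a ha := fun x hx => ⟨H, hH, haH, hx⟩

/-- If every convex subgroup containing `a` is all of `G`, then `maxConvex a ha` is normal. -/
theorem maxConvex_normal (a : G) (ha : 1 < a)
    (hgen : ∀ K : Subgroup G, ConvexSub K → a ∈ K → K = ⊤) :
    (maxConvex a ha).Normal := by
  constructor
  intro g hg f
  set C := maxConvex a ha
  -- the subgroup K_w := C.comap (conj w) is convex and avoids a, for every w
  have key : ∀ w : G, (C.comap (MulAut.conj w).toMonoidHom : Set G) ⊆ (C : Set G) := by
    intro w
    set K := C.comap (MulAut.conj w).toMonoidHom with hKdef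
    have hmem : ∀ x : G, x ∈ K ↔ w * x * w⁻¹ ∈ C := by
      intro x
      simp [hKdef, Subgroup.mem_comap, MulAut.conj_apply]
    have hKconv : ConvexSub K := by
      intro x y hy h1 hlt
      rw [hmem] at hy ⊢
      have c1 : 1 < w * x * w⁻¹ := by
        have := conj_lt_conj w h1
        simpa using this
      exact (maxConvex_convex a ha) hy c1 (conj_lt_conj w hlt)
    have haK : a ∉ K := by
      intro haK
      have : K = ⊤ := hgen K hKconv haK
      have : w⁻¹ * a * w ∈ K := this ▸ Subgroup.mem_top _
      rw [hmem] at this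
      have : a ∈ C := by
        have h2 : w * (w⁻¹ * a * w) * w⁻¹ = a := by group
        rwa [h2] at this
      exact not_mem_maxConvex a ha this
    exact le_maxConvex hKconv haK
  -- now conclude
  have : f⁻¹ * (f * g * f⁻¹) * f⁻¹⁻¹ ∈ C := by
    have h2 : f⁻¹ * (f * g * f⁻¹) * f⁻¹⁻¹ = g := by group
    rwa [h2]
  exact key f⁻¹ this

/-- Archimedean property relative to `maxConvex`. -/
theorem maxConvex_arch (a : G) (ha : 1 < a)
    (hgen : ∀ K : Subgroup G, ConvexSub K → a ∈ K → K = ⊤)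
    {x : G} (hx : 1 < x) (hxC : x ∉ maxConvex a ha) (g : G) : ∃ n : ℕ, g ≤ x ^ n := by
  haveI := covariantClass_le_of_lt G G (· * ·)
  haveI := covariantClass_le_of_lt G G (Function.swap (· * ·))
  set D : Subgroup G :=
    { carrier := {g | ∃ n : ℕ, (x ^ n)⁻¹ < g ∧ g < x ^ n}
      one_mem' := ⟨1, by simpa using hx, by simpa using hx⟩
      inv_mem' := by
        rintro y ⟨n, h1, h2⟩
        exact ⟨n, by simpa using inv_lt_inv_iff.mpr h2, by
          simpa using inv_lt_inv_iff.mpr h1⟩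
      mul_mem' := by
        rintro y z ⟨n, hy1, hy2⟩ ⟨m, hz1, hz2⟩
        refine ⟨n + m, ?_, ?_⟩
        · have := mul_lt_mul_of_lt_of_lt hy1 hz1
          rwa [← inv_pow, ← inv_pow, ← pow_add, inv_pow] at this
        · have := mul_lt_mul_of_lt_of_lt hy2 hz2
          rwa [← pow_add] at this } with hD
  have hmemD : ∀ y : G, y ∈ D ↔ ∃ n : ℕ, (x ^ n)⁻¹ < y ∧ y < x ^ n := fun y => Iff.rfl
  have hDconv : ConvexSub D := by
    rintro y z ⟨n, hz1, hz2⟩ h1 hlt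
    refine ⟨n, ?_, lt_trans hlt hz2⟩
    have h5 : (1:G) ≤ x ^ n := one_le_pow_of_one_le' hx.le n
    exact lt_of_le_of_lt (Left.inv_le_one_iff.mpr h5) h1
  have hxD : x ∈ D := by
    refine ⟨2, ?_, ?_⟩
    · calc (x ^ 2)⁻¹ ≤ 1 := Left.inv_le_one_iff.mpr (one_le_pow_of_one_le' hx.le 2)
        _ < x := hx
    · have h6 : x * 1 < x * x := mul_lt_mul_right hx x
      rw [mul_one] at h6
      calc x < x * x := h6
        _ = x ^ 2 := (pow_two x).symm
  have haD : a ∈ D := by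
    by_contra haD
    exact hxC (le_maxConvex hDconv haD hxD)
  have : D = ⊤ := hgen D hDconv haD
  have hgD : g ∈ D := this ▸ Subgroup.mem_top g
  obtain ⟨n, _, h2⟩ := hgD
  exact ⟨n, h2.le⟩

end Convex


section QuotOrder

variable {G : Type*} [Group G] [LinearOrder G]
  [CovariantClass G G (· * ·) (· < ·)] [CovariantClass G G (Function.swap (· * ·)) (· < ·)]
  (C : Subgroup G) [C.Normal]

/-- A coset is positive if it has a representative `> 1` not in `C`. -/
def QPos : G ⧸ C → Prop := fun q => ∃ u : G, 1 < u ∧ u ∉ C ∧ (u : G ⧸ C) = q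


theorem qpos_not_one (hconv : ConvexSub C) : ¬ QPos C 1 := by
  rintro ⟨u, hu1, huC, hu⟩
  exact huC ((QuotientGroup.eq_one_iff u).mp hu)

theorem qpos_mul (hconv : ConvexSub C) {p q : G ⧸ C} (hp : QPos C p) (hq : QPos C q) :
    QPos C (p * q) := by
  obtain ⟨u, hu1, huC, hu⟩ := hp
  obtain ⟨v, hv1, hvC, hv⟩ := hq
  refine ⟨u * v, ?_, ?_, by rw [QuotientGroup.mk_mul, hu, hv]⟩
  · have h2 : u * 1 < u * v := mul_lt_mul_right hv1 u
    rw [mul_one] at h2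
    exact hu1.trans h2
  · intro hmem
    have h2 : u * 1 < u * v := mul_lt_mul_right hv1 u
    rw [mul_one] at h2
    exact huC (hconv hmem hu1 h2)

theorem qpos_total {q : G ⧸ C} (hq : q ≠ 1) : QPos C q ∨ QPos C q⁻¹ := by
  obtain ⟨g, rfl⟩ := QuotientGroup.mk_surjective q
  have hgC : g ∉ C := fun h => hq ((QuotientGroup.eq_one_iff g).mpr h)
  rcases lt_trichotomy g 1 with h | h | h
  · right
    refine ⟨g⁻¹, ?_, fun hc => hgC (by simpa using C.inv_mem hc), rfl⟩
    exact Left.one_lt_inv_iff.mpr h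
  · exact absurd (h ▸ C.one_mem) hgC
  · exact Or.inl ⟨g, h, hgC, rfl⟩

theorem qpos_conj {q : G ⧸ C} (hq : QPos C q) (p : G ⧸ C) : QPos C (p * q * p⁻¹) := by
  obtain ⟨u, hu1, huC, hu⟩ := hq
  obtain ⟨f, rfl⟩ := QuotientGroup.mk_surjective p
  refine ⟨f * u * f⁻¹, ?_, ?_, by rw [← hu]; rfl⟩
  · have := mul_lt_mul_left (mul_lt_mul_right hu1 f) f⁻¹
    simpa using this
  · intro hmem
    have : f⁻¹ * (f * u * f⁻¹) * f⁻¹⁻¹ ∈ C := Subgroup.Normal.conj_mem ‹C.Normal› _ hmem f⁻¹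
    have h2 : f⁻¹ * (f * u * f⁻¹) * f⁻¹⁻¹ = u := by group
    rw [h2] at this
    exact huC this

/-- The induced strict order on the quotient. -/
def Qlt : G ⧸ C → G ⧸ C → Prop := fun x y => QPos C (x⁻¹ * y)

theorem qlt_sto (hconv : ConvexSub C) : IsStrictTotalOrder (G ⧸ C) (Qlt C) := by
  haveI ht : IsTrichotomous (G ⧸ C) (Qlt C) := by
    constructor
    intro x y
    suffices H : Qlt C x y ∨ x = y ∨ Qlt C y x by
      intro h1 h2; rcases H with H | H | H
      exacts [absurd H h1, H, absurd H h2]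
    rcases eq_or_ne x y with rfl | hne
    · exact Or.inr (Or.inl rfl)
    · have h1 : x⁻¹ * y ≠ 1 := fun h => hne (by
        have := congrArg (x * ·) h
        simpa using this.symm)
      rcases qpos_total C h1 with h | h
      · exact Or.inl h
      · refine Or.inr (Or.inr ?_)
        show QPos C (y⁻¹ * x)
        have e : (x⁻¹ * y)⁻¹ = y⁻¹ * x := by group
        rwa [e] at h
  haveI hi : IsIrrefl (G ⧸ C) (Qlt C) := by
    constructor
    intro x hx
    have hx' : QPos C (x⁻¹ * x) := hx
    rw [inv_mul_cancel] at hx'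
    exact qpos_not_one C hconv hx'
  haveI htr : IsTrans (G ⧸ C) (Qlt C) := by
    constructor
    intro x y z hxy hyz
    have h : QPos C ((x⁻¹ * y) * (y⁻¹ * z)) := qpos_mul C hconv hxy hyz
    have e : (x⁻¹ * y) * (y⁻¹ * z) = x⁻¹ * z := by group
    rwa [e] at h
  haveI hso : IsStrictOrder (G ⧸ C) (Qlt C) := ⟨⟩
  exact ⟨⟩

end QuotOrder


section TorsionFree

variable {Q : Type*} [Group Q] [LinearOrder Q]
  [CovariantClass Q Q (· * ·) (· < ·)] [CovariantClass Q Q (Function.swap (· * ·)) (· < ·)]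

theorem ordered_one_lt_zpow {q : Q} (hq : 1 < q) {c : ℤ} (hc : 0 < c) : 1 < q ^ c := by
  haveI := covariantClass_le_of_lt Q Q (· * ·)
  haveI := covariantClass_le_of_lt Q Q (Function.swap (· * ·))
  have h : q ^ c = q ^ c.toNat := by
    rw [← zpow_natCast, Int.toNat_of_nonneg hc.le]
  rw [h]
  exact one_lt_pow' hq (by omega)

theorem ordered_zpow_ne_one {q : Q} (hq : q ≠ 1) {c : ℤ} (hc : c ≠ 0) : q ^ c ≠ 1 := by
  have key : ∀ x : Q, 1 < x → ∀ d : ℤ, d ≠ 0 → x ^ d ≠ 1 := by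
    intro x hx d hd
    rcases hd.lt_or_gt with h | h
    · have h2 : 1 < x ^ (-d) := ordered_one_lt_zpow hx (by omega)
      intro he
      rw [zpow_neg, he, inv_one] at h2
      exact lt_irrefl _ h2
    · exact (ordered_one_lt_zpow hx h).ne'
  rcases hq.lt_or_gt with h | h
  · have h1 : 1 < q⁻¹ := Left.one_lt_inv_iff.mpr h
    intro he
    exact key q⁻¹ h1 c hc (by rw [inv_zpow, he, inv_one])
  · exact key q h c hc

end TorsionFree

section Assembly

theorem levi_aux {G : Type*} [Group G] [Nontrivial G] [LinearOrder G]
    [CovariantClass G G (· * ·) (· < ·)] [CovariantClass G G (Function.swap (· * ·)) (· < ·)]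
    (hfg : Group.FG G) : ∃ φ : G →* Multiplicative ℤ, Function.Surjective φ := by
  haveI := covariantClass_le_of_lt G G (· * ·)
  haveI := covariantClass_le_of_lt G G (Function.swap (· * ·))
  classical
  -- a finite generating set
  obtain ⟨S, hSclo⟩ : ∃ S : Finset G, Subgroup.closure (S : Set G) = ⊤ := Group.fg_def.mp hfg
  -- the dominating element a
  set T : Finset G := insert 1 (S ∪ S.image (·⁻¹)) with hT
  have hTne : T.Nonempty := ⟨1, Finset.mem_insert_self _ _⟩
  set a := T.max' hTne with ha_def
  have h1a : (1:G) ≤ a := Finset.le_max' T 1 (Finset.mem_insert_self _ _)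
  have hsle : ∀ s ∈ S, s ≤ a := fun s hs =>
    Finset.le_max' T s (by simp [hT, hs])
  have hsinvle : ∀ s ∈ S, a⁻¹ ≤ s := by
    intro s hs
    have h2 : s⁻¹ ≤ a := Finset.le_max' T s⁻¹ (by
      simp only [hT, Finset.mem_insert, Finset.mem_union, Finset.mem_image]
      exact Or.inr (Or.inr ⟨s, hs, rfl⟩))
    have h3 := inv_le_inv_iff.mpr h2
    rwa [inv_inv] at h3
  have ha : 1 < a := by
    rcases eq_or_lt_of_le h1a with h | h
    · exfalso
      have hs1 : ∀ s ∈ S, s = 1 := by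
        intro s hs
        have h4 : a⁻¹ ≤ s := hsinvle s hs
        rw [← h, inv_one] at h4
        exact le_antisymm (h ▸ hsle s hs) h4
      have hsub : (S : Set G) ⊆ ({1} : Set G) := fun s hs => hs1 s hs
      have hbot : (⊤ : Subgroup G) ≤ Subgroup.closure ({1} : Set G) := by
        rw [← hSclo]
        exact Subgroup.closure_mono hsub
      rw [Subgroup.closure_singleton_one] at hbot
      obtain ⟨g, hg⟩ := exists_ne (1 : G)
      exact hg (Subgroup.mem_bot.mp (hbot (Subgroup.mem_top g)))
    · exact h
  -- maximality of convex subgroups containing a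
  have hgen : ∀ K : Subgroup G, ConvexSub K → a ∈ K → K = ⊤ := by
    intro K hK haK
    rw [eq_top_iff, ← hSclo, Subgroup.closure_le]
    intro s hs
    exact hK.mem_of_between (K.inv_mem haK) haK (hsinvle s hs) (hsle s hs)
  set C := maxConvex a ha with hC
  haveI hCnorm : C.Normal := maxConvex_normal a ha hgen
  have hCconv : ConvexSub C := maxConvex_convex a ha
  -- the ordered quotient
  haveI : DecidableRel (Qlt C) := Classical.decRel _
  haveI hsto : IsStrictTotalOrder (G ⧸ C) (Qlt C) := qlt_sto C hCconv
  letI : LinearOrder (G ⧸ C) := linearOrderOfSTO (Qlt C)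
  haveI hcov1 : CovariantClass (G ⧸ C) (G ⧸ C) (· * ·) (· < ·) := by
    constructor
    intro f x y h
    show Qlt C (f * x) (f * y)
    show QPos C _
    rw [show ((f * x)⁻¹ * (f * y)) = x⁻¹ * y by group]
    exact h
  haveI hcov2 : CovariantClass (G ⧸ C) (G ⧸ C) (Function.swap (· * ·)) (· < ·) := by
    constructor
    intro f x y h
    show Qlt C (x * f) (y * f)
    have h2 : QPos C (f⁻¹ * (x⁻¹ * y) * f⁻¹⁻¹) := qpos_conj C h f⁻¹
    show QPos C _
    rw [show ((x * f)⁻¹ * (y * f)) = f⁻¹ * (x⁻¹ * y) * f⁻¹⁻¹ by group]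
    exact h2
  -- archimedean property of the quotient
  have harch : ∀ x y : G ⧸ C, 1 < x → ∃ n : ℕ, y ≤ x ^ n := by
    intro x y hx
    have hx' : QPos C x := by
      have h3 : QPos C ((1:G ⧸ C)⁻¹ * x) := hx
      rwa [inv_one, one_mul] at h3
    obtain ⟨u, hu1, huC, rfl⟩ := hx'
    obtain ⟨g, rfl⟩ := QuotientGroup.mk_surjective y
    obtain ⟨n, hn⟩ := maxConvex_arch a ha hgen hu1 huC g
    refine ⟨n, ?_⟩
    by_cases hw : g⁻¹ * u ^ n ∈ C
    · have h4 : ((g⁻¹ * u ^ n : G) : G ⧸ C) = 1 := (QuotientGroup.eq_one_iff _).mpr hw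
      rw [QuotientGroup.mk_mul, QuotientGroup.mk_inv, QuotientGroup.mk_pow] at h4
      have h5 : (g : G ⧸ C) = ((u : G ⧸ C)) ^ n := by
        have := congrArg ((g : G ⧸ C) * ·) h4
        simpa [mul_assoc] using this.symm
      exact le_of_eq h5
    · have h6 : (1:G) ≤ g⁻¹ * u ^ n := by
        have := mul_le_mul_right hn g⁻¹
        rwa [inv_mul_cancel] at this
      have h7 : (1:G) < g⁻¹ * u ^ n := by
        rcases eq_or_lt_of_le h6 with h | h
        · exact absurd (h ▸ C.one_mem) hw
        · exact h
      have h8 : Qlt C (g : G ⧸ C) ((u : G ⧸ C) ^ n) := by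
        refine ⟨g⁻¹ * u ^ n, h7, hw, ?_⟩
        rw [QuotientGroup.mk_mul, QuotientGroup.mk_inv, QuotientGroup.mk_pow]
      exact le_of_lt h8
  -- the quotient is abelian
  have hcomm : ∀ x y : G ⧸ C, x * y = y * x := holder_comm harch
  -- nontriviality of the quotient
  have hane : ((a : G ⧸ C)) ≠ 1 := by
    intro h
    exact not_mem_maxConvex a ha ((QuotientGroup.eq_one_iff a).mp h)
  haveI : Nontrivial (G ⧸ C) := ⟨⟨(a : G ⧸ C), 1, hane⟩⟩
  -- torsion-freeness of the quotient
  have htf : ∀ (q : G ⧸ C) (c : ℤ), q ^ c = 1 → c = 0 ∨ q = 1 := by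
    intro q c h
    by_contra hcon
    push_neg at hcon
    exact ordered_zpow_ne_one hcon.2 hcon.1 h
  -- move to the additive world
  letI : CommGroup (G ⧸ C) := { (inferInstance : Group (G ⧸ C)) with mul_comm := hcomm }
  haveI hfgi : Group.FG G := hfg
  haveI : Group.FG (G ⧸ C) := Group.fg_of_surjective (QuotientGroup.mk'_surjective C)
  haveI : AddGroup.FG (Additive (G ⧸ C)) := GroupFG.iff_add_fg.mp ‹_›
  haveI hmodfin : Module.Finite ℤ (Additive (G ⧸ C)) := Module.Finite.iff_addGroup_fg.mpr ‹_›
  haveI : NoZeroSMulDivisors ℤ (Additive (G ⧸ C)) := by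
    constructor
    intro c x h
    have h9 : x.toMul ^ c = 1 := by
      have h10 : (c • x).toMul = x.toMul ^ c := toMul_zsmul c x
      rw [h] at h10
      exact h10.symm
    rcases htf x.toMul c h9 with h1 | h1
    · exact Or.inl h1
    · exact Or.inr (by simpa using h1)
  haveI hfree : Module.Free ℤ (Additive (G ⧸ C)) := Module.free_of_finite_type_torsion_free'
  obtain ⟨i⟩ : Nonempty (Module.Free.ChooseBasisIndex ℤ (Additive (G ⧸ C))) := inferInstance
  set b := Module.Free.chooseBasis ℤ (Additive (G ⧸ C)) with hb
  set ℓ : Additive (G ⧸ C) →ₗ[ℤ] ℤ := b.coord i with hℓdef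
  have hℓ : Function.Surjective ℓ := by
    intro m
    refine ⟨m • b i, ?_⟩
    rw [hℓdef, map_smul, Module.Basis.coord_apply, Module.Basis.repr_self, Finsupp.single_eq_same]
    simp
  set ψ : (G ⧸ C) →* Multiplicative ℤ := AddMonoidHom.toMultiplicativeRight ℓ.toAddMonoidHom
    with hψdef
  have hψ : Function.Surjective ψ := by
    intro m
    obtain ⟨x, hx⟩ := hℓ m.toAdd
    refine ⟨x.toMul, ?_⟩
    show Multiplicative.ofAdd (ℓ.toAddMonoidHom (Additive.ofMul x.toMul)) = m
    simp [hx]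
  exact ⟨ψ.comp (QuotientGroup.mk' C), hψ.comp (QuotientGroup.mk'_surjective C)⟩

end Assembly

/-- A group is bi-orderable if it admits a strict linear order invariant under
both left and right multiplication. -/
def BiOrderable (G : Type*) [Group G] : Prop :=
  ∃ r : G → G → Prop, IsStrictTotalOrder G r ∧
    (∀ f g h : G, r g h → r (f * g) (f * h)) ∧
    (∀ f g h : G, r g h → r (g * f) (h * f))

/-- Levi: a nontrivial finitely generated bi-orderable group
surjects onto the integers. -/
theorem biOrderable_fg_surjects_onto_int {G : Type*} [Group G] [Nontrivial G]
    (hfg : Group.FG G) (hbo : BiOrderable G) :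
    ∃ φ : G →* Multiplicative ℤ, Function.Surjective φ := by
  classical
  obtain ⟨r, hsto, hleft, hright⟩ := hbo
  haveI : IsStrictTotalOrder G r := hsto
  haveI : DecidableRel r := Classical.decRel r
  letI : LinearOrder G := linearOrderOfSTO r
  haveI hcov1 : CovariantClass G G (· * ·) (· < ·) := ⟨fun f g h hgh => hleft f g h hgh⟩
  haveI hcov2 : CovariantClass G G (Function.swap (· * ·)) (· < ·) :=
    ⟨fun f g h hgh => hright f g h hgh⟩
  exact levi_aux hfg
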